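/- Let d ≥ 1, let h be a symmetric norm on ℝ^d, and for each i ∈ [d] let N_i be a norm on ℝ^{n_i}. On the product space V = ℝ^{n_1} × ... × ℝ^{n_d}, define the norm ‖v‖_V = h(N_1(v_1), ..., N_d(v_d)) for v = (v_1, ..., v_d), and equip V with the inner product ⟨v, w⟩ = Σ_i ⟨v_i, w_i⟩. Then the dual norm of ‖·‖_V satisfies ‖w‖_{V*} = h*(N_1*(w_1), ..., N_d*(w_d)) for all w = (w_1, ..., w_d) ∈ V. -/

import Mathlib

noncomputable section
open scoped BigOperators

/-- `N` is a norm on `ℝⁿ`. -/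
def IsNorm {n : ℕ} (N : (Fin n → ℝ) → ℝ) : Prop :=
  (∀ v, N v = 0 → v = 0) ∧ (∀ (c : ℝ) (v), N (c • v) = |c| * N v) ∧
  (∀ v w, N (v + w) ≤ N v + N w)

/-- `N` is a symmetric norm on `ℝⁿ`. -/
def IsSymmetricNorm {n : ℕ} (N : (Fin n → ℝ) → ℝ) : Prop :=
  IsNorm N ∧ (∀ (σ : Equiv.Perm (Fin n)) (v : Fin n → ℝ), N (fun i => v (σ i)) = N v) ∧
  (∀ v : Fin n → ℝ, N (fun i => |v i|) = N v)

/-- The dual norm `N*(w) = sup {⟨v,w⟩ : N(v) ≤ 1}` on `ℝᵐ`. -/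
def dualNorm {m : ℕ} (N : (Fin m → ℝ) → ℝ) (w : Fin m → ℝ) : ℝ :=
  sSup {t | ∃ v, N v ≤ 1 ∧ t = ∑ i, v i * w i}

/-- The dual norm on the product space `V = ℝ^{n₁} × ⋯ × ℝ^{n_d}` with respect to the
inner product `⟨v, w⟩ = ∑ i ⟨vᵢ, wᵢ⟩`. -/
def dualNormPi {d : ℕ} {m : Fin d → ℕ} (NV : (∀ i, Fin (m i) → ℝ) → ℝ)
    (w : ∀ i, Fin (m i) → ℝ) : ℝ :=
  sSup {t | ∃ v, NV v ≤ 1 ∧ t = ∑ i, ∑ j, v i j * w i j}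


variable {n : ℕ} {N : (Fin n → ℝ) → ℝ}

lemma isNorm_zero (hN : IsNorm N) : N 0 = 0 := by
  have := hN.2.1 0 0
  simpa using this

lemma isNorm_nonneg (hN : IsNorm N) (v : Fin n → ℝ) : 0 ≤ N v := by
  have h2 : N (-v) = N v := by
    have := hN.2.1 (-1) v
    simpa using this
  have h1 := hN.2.2 v (-v)
  have h0 : v + -v = 0 := by abel
  rw [h0, isNorm_zero hN, h2] at h1
  linarith

lemma isNorm_sum_le (hN : IsNorm N) {ι : Type*} (s : Finset ι) (f : ι → (Fin n → ℝ)) :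
    N (∑ i ∈ s, f i) ≤ ∑ i ∈ s, N (f i) := by
  classical
  induction s using Finset.induction with
  | empty => simp [isNorm_zero hN]
  | @insert _ _ ha ih =>
      rw [Finset.sum_insert ha, Finset.sum_insert ha]
      exact le_trans (hN.2.2 _ _) (by linarith)

lemma isNorm_upper (hN : IsNorm N) :
    ∀ v : Fin n → ℝ, N v ≤ (∑ j, N (Pi.single j 1)) * ‖v‖ := by
  intro v
  have hv : v = ∑ j, Pi.single j (v j) := (Finset.univ_sum_single v).symm
  calc N v = N (∑ j, Pi.single j (v j)) := by rw [← hv]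
    _ ≤ ∑ j, N (Pi.single j (v j)) := isNorm_sum_le hN _ _
    _ ≤ ∑ j, N (Pi.single j 1) * ‖v‖ := by
        apply Finset.sum_le_sum
        intro j _
        have : Pi.single j (v j) = (v j) • (Pi.single j (1:ℝ) : Fin n → ℝ) := by
          ext k
          by_cases hk : k = j
          · subst hk; simp
          · simp [Pi.single_eq_of_ne hk]
        rw [this, hN.2.1]
        have h1 : |v j| ≤ ‖v‖ := by
          have := norm_le_pi_norm v j
          simpa [Real.norm_eq_abs] using this
        have h2 : 0 ≤ N (Pi.single j (1:ℝ)) := isNorm_nonneg hN _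
        calc |v j| * N (Pi.single j 1) ≤ ‖v‖ * N (Pi.single j 1) :=
              mul_le_mul_of_nonneg_right h1 h2
          _ = N (Pi.single j 1) * ‖v‖ := mul_comm _ _
    _ = (∑ j, N (Pi.single j 1)) * ‖v‖ := by rw [Finset.sum_mul]

lemma isNorm_continuous (hN : IsNorm N) : Continuous N := by
  set K := ∑ j, N (Pi.single j (1:ℝ)) with hK
  have hK0 : 0 ≤ K := Finset.sum_nonneg fun j _ => isNorm_nonneg hN _
  have hlip : LipschitzWith K.toNNReal N := by
    apply LipschitzWith.of_dist_le_mul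
    intro x y
    have hub := isNorm_upper hN (x - y)
    have h1 : N x - N y ≤ N (x - y) := by
      have := hN.2.2 (x - y) y
      have hxy : x - y + y = x := by abel
      rw [hxy] at this
      linarith
    have h2 : N y - N x ≤ N (x - y) := by
      have := hN.2.2 (y - x) x
      have hyx : y - x + x = y := by abel
      rw [hyx] at this
      have hneg : N (y - x) = N (x - y) := by
        have := hN.2.1 (-1) (x - y)
        have e : (-1 : ℝ) • (x - y) = y - x := by
          ext k; simp
        rw [e] at this
        simpa using this
      linarith
    rw [Real.dist_eq, dist_eq_norm]
    rw [abs_le]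
    constructor
    · rw [Real.coe_toNNReal K hK0]
      nlinarith
    · rw [Real.coe_toNNReal K hK0]
      nlinarith
  exact hlip.continuous

lemma exists_pos_lower (hN : IsNorm N) : ∃ c > 0, ∀ v, c * ‖v‖ ≤ N v := by
  rcases eq_or_ne n 0 with h0 | h0
  · refine ⟨1, one_pos, fun v => ?_⟩
    have hv : v = 0 := by
      subst h0
      funext i
      exact i.elim0
    rw [hv]
    simpa using isNorm_nonneg hN 0
  · haveI : Nonempty (Fin n) := ⟨⟨0, Nat.pos_of_ne_zero h0⟩⟩
    have hcs : IsCompact (Metric.sphere (0 : Fin n → ℝ) 1) := isCompact_sphere 0 1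
    have hne : (Metric.sphere (0 : Fin n → ℝ) 1).Nonempty := by
      refine ⟨fun _ => 1, ?_⟩
      rw [Metric.mem_sphere, dist_zero_right]
      rw [pi_norm_const]
      simp
    obtain ⟨x0, hx0mem, hx0min⟩ :=
      hcs.exists_isMinOn hne (isNorm_continuous hN).continuousOn
    have hx0norm : ‖x0‖ = 1 := by
      simpa [Metric.mem_sphere, dist_zero_right] using hx0mem
    have hx0ne : x0 ≠ 0 := by
      intro hc; rw [hc] at hx0norm; simp at hx0norm
    have hc0 : 0 < N x0 := by
      rcases lt_or_eq_of_le (isNorm_nonneg hN x0) with h | h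
      · exact h
      · exact absurd (hN.1 x0 h.symm) hx0ne
    refine ⟨N x0, hc0, fun v => ?_⟩
    rcases eq_or_ne v 0 with hv | hv
    · rw [hv]; simpa using isNorm_nonneg hN 0
    · have hvpos : 0 < ‖v‖ := norm_pos_iff.mpr hv
      set u := ‖v‖⁻¹ • v with hu
      have hun : ‖u‖ = 1 := by
        rw [hu, norm_smul, Real.norm_eq_abs, abs_inv, abs_of_pos hvpos]
        field_simp
      have humem : u ∈ Metric.sphere (0 : Fin n → ℝ) 1 := by
        simp [Metric.mem_sphere, dist_zero_right, hun]
      have h1 : N x0 ≤ N u := hx0min humem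
      have h2 : N u = ‖v‖⁻¹ * N v := by
        rw [hu, hN.2.1, abs_inv, abs_of_pos hvpos]
      rw [h2] at h1
      have := mul_le_mul_of_nonneg_right h1 (le_of_lt hvpos)
      calc N x0 * ‖v‖ ≤ ‖v‖⁻¹ * N v * ‖v‖ := this
        _ = N v := by field_simp


variable {n : ℕ} {N : (Fin n → ℝ) → ℝ}


lemma zero_mem_dualSet (hN : IsNorm N) (w : Fin n → ℝ) :
    (0:ℝ) ∈ {t | ∃ v, N v ≤ 1 ∧ t = ∑ i, v i * w i} :=
  ⟨0, by rw [isNorm_zero hN]; norm_num, by simp⟩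

lemma isNorm_le_of_le_one {c : ℝ} (hc : 0 < c) (hlow : ∀ v, c * ‖v‖ ≤ N v)
    {v : Fin n → ℝ} (hv : N v ≤ 1) : ‖v‖ ≤ c⁻¹ := by
  rw [← one_div, le_div_iff₀ hc]
  have := hlow v
  nlinarith

lemma bddAbove_dualSet (hN : IsNorm N) (w : Fin n → ℝ) :
    BddAbove {t | ∃ v, N v ≤ 1 ∧ t = ∑ i, v i * w i} := by
  obtain ⟨c, hc, hlow⟩ := exists_pos_lower hN
  refine ⟨∑ i, c⁻¹ * |w i|, fun t ht => ?_⟩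
  obtain ⟨v, hv1, rfl⟩ := ht
  have hvn : ‖v‖ ≤ c⁻¹ := isNorm_le_of_le_one hc hlow hv1
  apply Finset.sum_le_sum
  intro i _
  have h1 : |v i| ≤ c⁻¹ := by
    have := norm_le_pi_norm v i
    rw [Real.norm_eq_abs] at this
    linarith
  calc v i * w i ≤ |v i * w i| := le_abs_self _
    _ = |v i| * |w i| := abs_mul _ _
    _ ≤ c⁻¹ * |w i| := mul_le_mul_of_nonneg_right h1 (abs_nonneg _)

lemma dualNorm_nonneg (hN : IsNorm N) (w : Fin n → ℝ) : 0 ≤ dualNorm N w :=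
  le_csSup (bddAbove_dualSet hN w) (zero_mem_dualSet hN w)

lemma pair_le_dual (hN : IsNorm N) (w v : Fin n → ℝ) :
    ∑ i, v i * w i ≤ N v * dualNorm N w := by
  rcases eq_or_lt_of_le (isNorm_nonneg hN v) with h0 | h0
  · have hv : v = 0 := hN.1 v h0.symm
    rw [hv, isNorm_zero hN]
    simp
  · set u := (N v)⁻¹ • v with hu
    have hNu : N u ≤ 1 := by
      rw [hu, hN.2.1, abs_inv, abs_of_pos h0]
      rw [inv_mul_cancel₀ (ne_of_gt h0)]
    have hmem : (∑ i, u i * w i) ∈ {t | ∃ v, N v ≤ 1 ∧ t = ∑ i, v i * w i} :=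
      ⟨u, hNu, rfl⟩
    have hle : (∑ i, u i * w i) ≤ dualNorm N w := le_csSup (bddAbove_dualSet hN w) hmem
    have hsum : ∑ i, u i * w i = (N v)⁻¹ * ∑ i, v i * w i := by
      rw [Finset.mul_sum]
      apply Finset.sum_congr rfl
      intro i _
      rw [hu]
      simp [mul_assoc]
    rw [hsum] at hle
    have := mul_le_mul_of_nonneg_left hle (le_of_lt h0)
    calc ∑ i, v i * w i = N v * ((N v)⁻¹ * ∑ i, v i * w i) := by
          field_simp
      _ ≤ N v * dualNorm N w := this

lemma dual_approx (hN : IsNorm N) (w : Fin n → ℝ) {ε : ℝ} (hε : 0 < ε) :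
    ∃ v, N v ≤ 1 ∧ dualNorm N w - ε < ∑ i, v i * w i := by
  have hlt : dualNorm N w - ε < dualNorm N w := by linarith
  obtain ⟨t, ht, htlt⟩ := exists_lt_of_lt_csSup ⟨0, zero_mem_dualSet hN w⟩ hlt
  obtain ⟨v, hv1, rfl⟩ := ht
  exact ⟨v, hv1, htlt⟩

/-- one-coordinate shrink -/
lemma update_le {d : ℕ} {h : (Fin d → ℝ) → ℝ} (hh : IsNorm h)
    (habs : ∀ v : Fin d → ℝ, h (fun i => |v i|) = h v)
    (y : Fin d → ℝ) (a : Fin d) {t : ℝ} (ht0 : 0 ≤ t) (ht1 : t ≤ 1) :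
    h (Function.update y a (t * y a)) ≤ h y := by
  set z' := Function.update y a (-(y a)) with hz'
  have hz'h : h z' = h y := by
    rw [← habs z', ← habs y]
    congr 1
    funext i
    by_cases hi : i = a
    · subst hi; simp [hz']
    · simp [hz', Function.update_of_ne hi]
  have hdecomp : Function.update y a (t * y a)
      = ((1+t)/2) • y + ((1-t)/2) • z' := by
    funext i
    by_cases hi : i = a
    · subst hi
      simp [hz', Pi.add_apply]
      ring
    · simp [hz', Function.update_of_ne hi, Pi.add_apply]
      ring
  rw [hdecomp]
  calc h (((1+t)/2) • y + ((1-t)/2) • z')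
      ≤ h (((1+t)/2) • y) + h (((1-t)/2) • z') := hh.2.2 _ _
    _ = ((1+t)/2) * h y + ((1-t)/2) * h z' := by
        rw [hh.2.1, hh.2.1, abs_of_nonneg (by linarith : (0:ℝ) ≤ (1+t)/2),
          abs_of_nonneg (by linarith : (0:ℝ) ≤ (1-t)/2)]
    _ = h y := by rw [hz'h]; ring

/-- symmetric norms are monotone on the nonnegative orthant -/
lemma sym_mono {d : ℕ} {h : (Fin d → ℝ) → ℝ} (hh : IsNorm h)
    (habs : ∀ v : Fin d → ℝ, h (fun i => |v i|) = h v)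
    (x y : Fin d → ℝ) (hx : ∀ i, 0 ≤ x i) (hxy : ∀ i, x i ≤ y i) : h x ≤ h y := by
  classical
  have key : ∀ s : Finset (Fin d), h (fun i => if i ∈ s then x i else y i) ≤ h y := by
    intro s
    induction s using Finset.induction with
    | empty => simp
    | @insert a s ha ih =>
        have hya : 0 ≤ y a := le_trans (hx a) (hxy a)
        obtain ⟨t, ht0, ht1, hxa⟩ : ∃ t, 0 ≤ t ∧ t ≤ 1 ∧ x a = t * y a := by
          rcases eq_or_lt_of_le hya with h0 | h0
          · refine ⟨0, le_refl _, zero_le_one, ?_⟩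
            have : x a = 0 := le_antisymm (by rw [h0]; exact hxy a) (hx a)
            rw [this, ← h0]; ring
          · refine ⟨x a / y a, div_nonneg (hx a) hya, ?_, ?_⟩
            · rw [div_le_one h0]; exact hxy a
            · field_simp
        set g := fun i => if i ∈ s then x i else y i with hg
        have hga : g a = y a := by simp [hg, ha]
        have heq : (fun i => if i ∈ insert a s then x i else y i)
            = Function.update g a (t * g a) := by
          funext i
          by_cases hi : i = a
          · subst hi
            simp [Finset.mem_insert, hg, ha, hxa]
          · rw [Function.update_of_ne hi]
            simp [Finset.mem_insert, hi, hg]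
        rw [heq]
        exact le_trans (update_le hh habs g a ht0 ht1) ih
  have := key Finset.univ
  simpa using this

/-- Duality for `h`-sums: if `h` is a symmetric norm on `ℝ^d` and `Nᵢ` are norms on
`ℝ^{nᵢ}`, then the dual of the norm `v ↦ h(N₁(v₁), …, N_d(v_d))` on the product space is
`w ↦ h*(N₁*(w₁), …, N_d*(w_d))`. -/
theorem h_sum_dual_norm {d : ℕ} (hd : 1 ≤ d) (m : Fin d → ℕ)
    (h : (Fin d → ℝ) → ℝ) (hh : IsSymmetricNorm h)
    (N : ∀ i, (Fin (m i) → ℝ) → ℝ) (hN : ∀ i, IsNorm (N i))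
    (w : ∀ i, Fin (m i) → ℝ) :
    dualNormPi (fun v => h (fun i => N i (v i))) w
      = dualNorm h (fun i => dualNorm (N i) (w i)) := by
  classical
  obtain ⟨hh1, _hperm, habs⟩ := hh
  have hDnn : ∀ i, 0 ≤ dualNorm (N i) (w i) := fun i => dualNorm_nonneg (hN i) (w i)
  obtain ⟨ch, hch, hchlow⟩ := exists_pos_lower hh1
  choose c hc hclow using fun i => exists_pos_lower (hN i)
  -- S₁ basics
  have hNzero : (fun i => N i ((0 : ∀ i, Fin (m i) → ℝ) i)) = (0 : Fin d → ℝ) :=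
    funext fun i => isNorm_zero (hN i)
  have h0S1 : (0:ℝ) ∈ {t | ∃ v : ∀ i, Fin (m i) → ℝ,
      h (fun i => N i (v i)) ≤ 1 ∧ t = ∑ i, ∑ j, v i j * w i j} := by
    refine ⟨0, ?_, by simp⟩
    rw [hNzero, isNorm_zero hh1]
    norm_num
  have hS1bdd : BddAbove {t | ∃ v : ∀ i, Fin (m i) → ℝ,
      h (fun i => N i (v i)) ≤ 1 ∧ t = ∑ i, ∑ j, v i j * w i j} := by
    refine ⟨∑ i, ∑ j, (ch⁻¹ * (c i)⁻¹) * |w i j|, fun t ht => ?_⟩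
    obtain ⟨v, hv1, rfl⟩ := ht
    have hβ : ∀ i, N i (v i) ≤ ch⁻¹ := by
      intro i
      have h1 : ‖(fun i => N i (v i) : Fin d → ℝ)‖ ≤ ch⁻¹ :=
        isNorm_le_of_le_one hch hchlow hv1
      have h2 := norm_le_pi_norm (fun i => N i (v i)) i
      rw [Real.norm_eq_abs] at h2
      have h3 := le_abs_self (N i (v i))
      linarith
    have hvin : ∀ i, ‖v i‖ ≤ ch⁻¹ * (c i)⁻¹ := by
      intro i
      have h1 : c i * ‖v i‖ ≤ ch⁻¹ := le_trans (hclow i (v i)) (hβ i)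
      have h2 : ‖v i‖ ≤ ch⁻¹ / c i := by
        rw [le_div_iff₀ (hc i)]
        nlinarith
      rw [div_eq_mul_inv] at h2
      linarith
    apply Finset.sum_le_sum
    intro i _
    apply Finset.sum_le_sum
    intro j _
    have h1 : |v i j| ≤ ch⁻¹ * (c i)⁻¹ := by
      have := norm_le_pi_norm (v i) j
      rw [Real.norm_eq_abs] at this
      linarith [hvin i]
    calc v i j * w i j ≤ |v i j * w i j| := le_abs_self _
      _ = |v i j| * |w i j| := abs_mul _ _
      _ ≤ (ch⁻¹ * (c i)⁻¹) * |w i j| := mul_le_mul_of_nonneg_right h1 (abs_nonneg _)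
  rw [dualNormPi, dualNorm]
  apply le_antisymm
  · apply csSup_le ⟨0, h0S1⟩
    rintro t ⟨v, hv1, rfl⟩
    have hstep : ∑ i, ∑ j, v i j * w i j ≤ ∑ i, (N i (v i)) * dualNorm (N i) (w i) :=
      Finset.sum_le_sum fun i _ => pair_le_dual (hN i) (w i) (v i)
    refine le_trans hstep (le_csSup (bddAbove_dualSet hh1 (fun i => dualNorm (N i) (w i))) ?_)
    exact ⟨fun i => N i (v i), hv1, rfl⟩
  · apply csSup_le ⟨0, zero_mem_dualSet hh1 (fun i => dualNorm (N i) (w i))⟩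
    rintro t ⟨α, hα1, rfl⟩
    apply le_of_forall_pos_le_add
    intro ε hε
    have hA0 : 0 ≤ ∑ i, |α i| := Finset.sum_nonneg fun i _ => abs_nonneg _
    set A := ∑ i, |α i| with hA
    set ε' := ε / (A + 1) with hε'
    have hε'pos : 0 < ε' := div_pos hε (by linarith)
    choose v hv1 hv2 using fun i => dual_approx (hN i) (w i) hε'pos
    set u : ∀ i, Fin (m i) → ℝ := fun i => |α i| • v i with hu
    have hNu : ∀ i, N i (u i) = |α i| * N i (v i) := by
      intro i
      have he : u i = |α i| • v i := rfl
      rw [he, (hN i).2.1, abs_abs]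
    have hmem : (∑ i, ∑ j, u i j * w i j) ∈ {t | ∃ v : ∀ i, Fin (m i) → ℝ,
        h (fun i => N i (v i)) ≤ 1 ∧ t = ∑ i, ∑ j, v i j * w i j} := by
      refine ⟨u, ?_, rfl⟩
      have h1 : h (fun i => N i (u i)) ≤ h (fun i => |α i|) := by
        apply sym_mono hh1 habs
        · intro i
          rw [hNu i]
          exact mul_nonneg (abs_nonneg _) (isNorm_nonneg (hN i) _)
        · intro i
          rw [hNu i]
          calc |α i| * N i (v i) ≤ |α i| * 1 :=
                mul_le_mul_of_nonneg_left (hv1 i) (abs_nonneg _)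
            _ = |α i| := mul_one _
      have h2 : h (fun i => |α i|) = h α := habs α
      linarith
    have hT := le_csSup hS1bdd hmem
    have hTeq : ∑ i, ∑ j, u i j * w i j = ∑ i, |α i| * ∑ j, v i j * w i j := by
      apply Finset.sum_congr rfl
      intro i _
      rw [Finset.mul_sum]
      apply Finset.sum_congr rfl
      intro j _
      have he : u i j = |α i| * v i j := rfl
      rw [he, mul_assoc]
    have hper : ∀ i ∈ Finset.univ, α i * dualNorm (N i) (w i) - ε' * |α i|
        ≤ |α i| * ∑ j, v i j * w i j := by
      intro i _
      have h1 : |α i| * (dualNorm (N i) (w i) - ε') ≤ |α i| * ∑ j, v i j * w i j :=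
        mul_le_mul_of_nonneg_left (le_of_lt (hv2 i)) (abs_nonneg _)
      have h2 : α i * dualNorm (N i) (w i) ≤ |α i| * dualNorm (N i) (w i) :=
        mul_le_mul_of_nonneg_right (le_abs_self _) (hDnn i)
      nlinarith
    have hsum : (∑ i, α i * dualNorm (N i) (w i)) - ε' * A
        ≤ ∑ i, ∑ j, u i j * w i j := by
      rw [hTeq, hA, Finset.mul_sum, ← Finset.sum_sub_distrib]
      exact Finset.sum_le_sum hper
    have hεA : ε' * A ≤ ε := by
      have h1 : ε' * A ≤ ε' * (A + 1) :=
        mul_le_mul_of_nonneg_left (by linarith) (le_of_lt hε'pos)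
      have h2 : ε' * (A + 1) = ε := by
        rw [hε']
        field_simp
      linarith
    linarith
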